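/- Let o ∈ ℝ^N be a vector of coefficients on the vertices of a finite connected graph G, with ‖o‖_∞ = max_i |o_i| and Lipschitz constant ‖o‖_Lip = max over edges (i,j) of |o_i − o_j|. Then for any nonnegative measures x^a, x^b on the vertices and any λ > 0: |oᵀ(x^a − x^b)| ≤ max(λ⁻¹‖o‖_∞, ‖o‖_Lip) · W_{1,λ}(x^a, x^b). -/
import Mathlib


open Finset

variable {N : ℕ}

/-- The 1-Wasserstein distance on a finite graph with graph-distance cost:
the infimum of transport costs over couplings with prescribed marginals. -/
noncomputable def W1 (G : SimpleGraph (Fin N)) (x y : Fin N → ℝ) : ℝ :=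
  sInf {c | ∃ π : Fin N → Fin N → ℝ, (∀ m n, 0 ≤ π m n) ∧
    (∀ m, ∑ n, π m n = y m) ∧ (∀ n, ∑ m, π m n = x n) ∧
    c = ∑ m, ∑ n, (G.dist m n : ℝ) * π m n}

/-- The generalized 1-Wasserstein distance `W_{1,λ}`. -/
noncomputable def Wgen (G : SimpleGraph (Fin N)) (lam : ℝ) (x y : Fin N → ℝ) : ℝ :=
  sInf {c | ∃ xt yt : Fin N → ℝ,
    (∀ i, 0 ≤ xt i) ∧ (∀ i, xt i ≤ x i) ∧
    (∀ i, 0 ≤ yt i) ∧ (∀ i, yt i ≤ y i) ∧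
    (∑ i, xt i = ∑ i, yt i) ∧
    c = lam * ((∑ i, |x i - xt i|) + ∑ i, |y i - yt i|) + W1 G xt yt}

/-- The sup norm `‖o‖_∞ = max_i |o_i|` of a vector of observables. -/
noncomputable def supNorm (o : Fin N → ℝ) : ℝ := sSup (Set.range fun i => |o i|)

/-- The Lipschitz constant `‖o‖_Lip = max_{(i,j) ∈ E} |o_i − o_j|`. -/
noncomputable def lipNorm (G : SimpleGraph (Fin N)) (o : Fin N → ℝ) : ℝ :=
  sSup {r | ∃ i j, G.Adj i j ∧ r = |o i - o j|}

lemma aux_le_mul_sInf {T : Set ℝ} {L b : ℝ} (hL : 0 ≤ L) (hT : T.Nonempty)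
    (h : ∀ c ∈ T, b ≤ L * c) : b ≤ L * sInf T := by
  rcases hL.eq_or_lt with hL0 | hL'
  · obtain ⟨c, hc⟩ := hT
    have := h c hc
    rw [← hL0] at this ⊢
    simpa using this
  · have h2 : b / L ≤ sInf T := by
      apply le_csInf hT
      intro c hc
      rw [div_le_iff₀ hL']
      have := h c hc
      linarith [mul_comm L c]
    have := (div_le_iff₀ hL').mp h2
    linarith [mul_comm (sInf T) L]

lemma supNorm_nonneg (o : Fin N → ℝ) : 0 ≤ supNorm o :=
  Real.sSup_nonneg (by rintro r ⟨i, rfl⟩; exact abs_nonneg _)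

lemma lipNorm_nonneg (G : SimpleGraph (Fin N)) (o : Fin N → ℝ) : 0 ≤ lipNorm G o :=
  Real.sSup_nonneg (by rintro r ⟨i, j, _, rfl⟩; exact abs_nonneg _)

lemma abs_le_supNorm (o : Fin N → ℝ) (i : Fin N) : |o i| ≤ supNorm o :=
  le_csSup (Set.finite_range _).bddAbove ⟨i, rfl⟩

lemma abs_sub_le_lipNorm (G : SimpleGraph (Fin N)) (o : Fin N → ℝ) {i j : Fin N}
    (h : G.Adj i j) : |o i - o j| ≤ lipNorm G o := by
  apply le_csSup
  · apply Set.Finite.bddAbove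
    apply Set.Finite.subset (Set.finite_range fun p : Fin N × Fin N => |o p.1 - o p.2|)
    rintro r ⟨i, j, _, rfl⟩
    exact ⟨(i, j), rfl⟩
  · exact ⟨i, j, h, rfl⟩

lemma walk_lip (G : SimpleGraph (Fin N)) (o : Fin N → ℝ) {L : ℝ}
    (hL : ∀ i j, G.Adj i j → |o i - o j| ≤ L) :
    ∀ {u v : Fin N} (p : G.Walk u v), |o u - o v| ≤ L * p.length := by
  intro u v p
  induction p with
  | nil => simp
  | @cons u w v h p ih =>
      have h1 : |o u - o v| ≤ |o u - o w| + |o w - o v| := abs_sub_le _ _ _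
      have h2 := hL u w h
      simp only [SimpleGraph.Walk.length_cons, Nat.cast_add, Nat.cast_one]
      nlinarith

lemma lip_dist (G : SimpleGraph (Fin N)) (hG : G.Connected) (o : Fin N → ℝ) {L : ℝ}
    (hL : ∀ i j, G.Adj i j → |o i - o j| ≤ L) (u v : Fin N) :
    |o u - o v| ≤ L * G.dist u v := by
  obtain ⟨p, hp⟩ := (hG u v).exists_walk_length_eq_dist
  have := walk_lip G o hL p
  rw [hp] at this
  exact this

lemma W1_nonneg (G : SimpleGraph (Fin N)) (xt yt : Fin N → ℝ) : 0 ≤ W1 G xt yt := by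
  apply Real.sInf_nonneg
  rintro c ⟨π, hπ0, _, _, rfl⟩
  apply Finset.sum_nonneg
  intro m _
  apply Finset.sum_nonneg
  intro n _
  exact mul_nonneg (Nat.cast_nonneg _) (hπ0 m n)

lemma W1_set_nonempty (G : SimpleGraph (Fin N)) (xt yt : Fin N → ℝ)
    (hxt0 : ∀ i, 0 ≤ xt i) (hyt0 : ∀ i, 0 ≤ yt i) (hsum : ∑ i, xt i = ∑ i, yt i) :
    {c | ∃ π : Fin N → Fin N → ℝ, (∀ m n, 0 ≤ π m n) ∧
      (∀ m, ∑ n, π m n = yt m) ∧ (∀ n, ∑ m, π m n = xt n) ∧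
      c = ∑ m, ∑ n, (G.dist m n : ℝ) * π m n}.Nonempty := by
  by_cases hS : ∑ i, xt i = 0
  · have hxt : ∀ i, xt i = 0 := fun i =>
      (Finset.sum_eq_zero_iff_of_nonneg (fun i _ => hxt0 i)).mp hS i (mem_univ i)
    have hyt : ∀ i, yt i = 0 := fun i =>
      (Finset.sum_eq_zero_iff_of_nonneg (fun i _ => hyt0 i)).mp (hsum ▸ hS) i (mem_univ i)
    refine ⟨_, fun _ _ => 0, fun _ _ => le_refl 0, ?_, ?_, rfl⟩
    · intro m; simp [hyt m]
    · intro n; simp [hxt n]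
  · refine ⟨_, fun m n => yt m * xt n / (∑ i, xt i), ?_, ?_, ?_, rfl⟩
    · intro m n
      exact div_nonneg (mul_nonneg (hyt0 m) (hxt0 n))
        (Finset.sum_nonneg fun i _ => hxt0 i)
    · intro m
      rw [← Finset.sum_div, ← Finset.mul_sum, mul_div_assoc, div_self hS, mul_one]
    · intro n
      have : ∑ m, yt m * xt n / (∑ i, xt i) = (∑ m, yt m) * xt n / (∑ i, xt i) := by
        rw [← Finset.sum_div, ← Finset.sum_mul]
      rw [this, ← hsum, mul_comm, mul_div_assoc, div_self hS, mul_one]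


/-- Proposition 1: speed-limit duality bound for scalar observables, in terms
of the generalized Wasserstein distance. -/
theorem obs_change_le_max_mul_Wgen (G : SimpleGraph (Fin N)) (hG : G.Connected)
    (o : Fin N → ℝ) (xa xb : Fin N → ℝ)
    (hxa : ∀ i, 0 ≤ xa i) (hxb : ∀ i, 0 ≤ xb i) (lam : ℝ) (hlam : 0 < lam) :
    |∑ i, o i * (xa i - xb i)| ≤
      max (lam⁻¹ * supNorm o) (lipNorm G o) * Wgen G lam xa xb := by
  set M := max (lam⁻¹ * supNorm o) (lipNorm G o) with hM
  have hM0 : 0 ≤ M := le_trans (lipNorm_nonneg G o) (le_max_right _ _)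
  rw [Wgen]
  apply aux_le_mul_sInf hM0
  · -- nonempty : take xt = yt = 0
    exact ⟨_, 0, 0, fun _ => le_refl 0, fun i => hxa i, fun _ => le_refl 0,
      fun i => hxb i, by simp, rfl⟩
  · rintro c ⟨xt, yt, hxt0, hxta, hyt0, hytb, hsum, rfl⟩
    set A := ∑ i, |xa i - xt i| with hA
    set B := ∑ i, |xb i - yt i| with hB
    set W := W1 G xt yt with hW
    have hA0 : 0 ≤ A := Finset.sum_nonneg fun i _ => abs_nonneg _
    have hB0 : 0 ≤ B := Finset.sum_nonneg fun i _ => abs_nonneg _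
    have hW0 : 0 ≤ W := W1_nonneg G xt yt
    have h1 : |∑ i, o i * (xa i - xt i)| ≤ supNorm o * A := by
      calc |∑ i, o i * (xa i - xt i)| ≤ ∑ i, |o i * (xa i - xt i)| :=
            Finset.abs_sum_le_sum_abs _ _
        _ ≤ ∑ i, supNorm o * |xa i - xt i| := by
            apply Finset.sum_le_sum
            intro i _
            rw [abs_mul]
            exact mul_le_mul_of_nonneg_right (abs_le_supNorm o i) (abs_nonneg _)
        _ = supNorm o * A := by rw [hA, Finset.mul_sum]
    have h2 : |∑ i, o i * (xb i - yt i)| ≤ supNorm o * B := by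
      calc |∑ i, o i * (xb i - yt i)| ≤ ∑ i, |o i * (xb i - yt i)| :=
            Finset.abs_sum_le_sum_abs _ _
        _ ≤ ∑ i, supNorm o * |xb i - yt i| := by
            apply Finset.sum_le_sum
            intro i _
            rw [abs_mul]
            exact mul_le_mul_of_nonneg_right (abs_le_supNorm o i) (abs_nonneg _)
        _ = supNorm o * B := by rw [hB, Finset.mul_sum]
    have h3 : |∑ i, o i * xt i - ∑ i, o i * yt i| ≤ lipNorm G o * W := by
      rw [hW, W1]
      apply aux_le_mul_sInf (lipNorm_nonneg G o)
        (W1_set_nonempty G xt yt hxt0 hyt0 hsum)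
      rintro c ⟨π, hπ0, hrow, hcol, rfl⟩
      have key : ∑ i, o i * xt i - ∑ i, o i * yt i
          = ∑ m, ∑ n, (o n - o m) * π m n := by
        have e1 : ∑ i, o i * xt i = ∑ m, ∑ n, o n * π m n := by
          rw [Finset.sum_comm]
          apply Finset.sum_congr rfl
          intro n _
          rw [← Finset.mul_sum, hcol n]
        have e2 : ∑ i, o i * yt i = ∑ m, ∑ n, o m * π m n := by
          apply Finset.sum_congr rfl
          intro m _
          rw [← Finset.mul_sum, hrow m]
        rw [e1, e2, ← Finset.sum_sub_distrib]
        apply Finset.sum_congr rfl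
        intro m _
        rw [← Finset.sum_sub_distrib]
        apply Finset.sum_congr rfl
        intro n _
        ring
      rw [key]
      calc |∑ m, ∑ n, (o n - o m) * π m n| ≤ ∑ m, |∑ n, (o n - o m) * π m n| :=
            Finset.abs_sum_le_sum_abs _ _
        _ ≤ ∑ m, ∑ n, |(o n - o m) * π m n| := by
            apply Finset.sum_le_sum
            intro m _
            exact Finset.abs_sum_le_sum_abs _ _
        _ ≤ ∑ m, ∑ n, lipNorm G o * ((G.dist m n : ℝ) * π m n) := by
            apply Finset.sum_le_sum
            intro m _
            apply Finset.sum_le_sum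
            intro n _
            rw [abs_mul, abs_of_nonneg (hπ0 m n), ← mul_assoc]
            apply mul_le_mul_of_nonneg_right _ (hπ0 m n)
            have := lip_dist G hG o (fun i j h => abs_sub_le_lipNorm G o h) n m
            rw [SimpleGraph.dist_comm] at this
            exact this
        _ = lipNorm G o * ∑ m, ∑ n, (G.dist m n : ℝ) * π m n := by
            rw [Finset.mul_sum]
            apply Finset.sum_congr rfl
            intro m _
            rw [Finset.mul_sum]
    have split : ∑ i, o i * (xa i - xb i) =
        (∑ i, o i * (xa i - xt i)) + (∑ i, o i * xt i - ∑ i, o i * yt i)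
          - (∑ i, o i * (xb i - yt i)) := by
      simp only [mul_sub, Finset.sum_sub_distrib]
      ring
    have habs : |∑ i, o i * (xa i - xb i)| ≤ supNorm o * A + lipNorm G o * W
        + supNorm o * B := by
      rw [split]
      calc |(∑ i, o i * (xa i - xt i)) + (∑ i, o i * xt i - ∑ i, o i * yt i)
            - (∑ i, o i * (xb i - yt i))|
          ≤ |(∑ i, o i * (xa i - xt i)) + (∑ i, o i * xt i - ∑ i, o i * yt i)|
            + |∑ i, o i * (xb i - yt i)| := abs_sub _ _
        _ ≤ |∑ i, o i * (xa i - xt i)| + |∑ i, o i * xt i - ∑ i, o i * yt i|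
            + |∑ i, o i * (xb i - yt i)| := by
            have := abs_add_le (∑ i, o i * (xa i - xt i))
              (∑ i, o i * xt i - ∑ i, o i * yt i)
            linarith
        _ ≤ supNorm o * A + lipNorm G o * W + supNorm o * B := by linarith
    have hs : supNorm o ≤ lam * M := by
      have h1 : lam⁻¹ * supNorm o ≤ M := le_max_left _ _
      have := mul_le_mul_of_nonneg_left h1 hlam.le
      rwa [← mul_assoc, mul_inv_cancel₀ hlam.ne', one_mul] at this
    have hl : lipNorm G o ≤ M := le_max_right _ _
    have hAB : supNorm o * (A + B) ≤ lam * M * (A + B) :=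
      mul_le_mul_of_nonneg_right hs (add_nonneg hA0 hB0)
    have hLW : lipNorm G o * W ≤ M * W := mul_le_mul_of_nonneg_right hl hW0
    nlinarith [habs, hAB, hLW]
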